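/- Fix C₀ > 0. There exist δ > 0, C > 0 and T > 0 such that for all t ≥ T, all real ξ with 0 ≤ (ξ + 1/8)·t^{2/3} ≤ C₀, and all complex z with |z − z_a| ≤ δ, one has |−t·θ₁₂(z) + t·θ₁₂(z_a) − (8/3)·ẑ³ − 2·s̃·ẑ| ≤ C·t^{−1/3}·(|ẑ|² + |ẑ|⁴), where ẑ = (c_a t)^{1/3}(z − z_a) and s̃ = s₁·(1 + 8ξ)·t^{2/3}. -/

import Mathlib

open Real Complex

/-- The complex phase function `θ₁₂(z) = √3·(z − 1/z)·(ξ − 1/((z − 1/z)² + 1))`. -/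
noncomputable def theta12C (ξ : ℝ) (z : ℂ) : ℂ :=
  (Real.sqrt 3 : ℂ) * (z - 1/z) * ((ξ : ℂ) - 1 / ((z - 1/z)^2 + 1))

/-- The colliding saddle point `z_a = (√7 + √3)/2`. -/
noncomputable def zaP : ℝ := (Real.sqrt 7 + Real.sqrt 3) / 2

/-- The cubic-scaling constant `c_a = (21/256)(14√3 − 9√7)`. -/
noncomputable def caP : ℝ := (21/256) * (14 * Real.sqrt 3 - 9 * Real.sqrt 7)

/-- `s₁ = 3^{1/6}(√21 − 7)/(2^{7/3}·7^{1/3}·(14√3 − 9√7)^{1/3})`. -/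
noncomputable def s1P : ℝ :=
  (3:ℝ) ^ ((1:ℝ)/6) * (Real.sqrt 21 - 7) /
    ((2:ℝ) ^ ((7:ℝ)/3) * (7:ℝ) ^ ((1:ℝ)/3) *
      (14 * Real.sqrt 3 - 9 * Real.sqrt 7) ^ ((1:ℝ)/3))

noncomputable def Ppoly (a b z : ℂ) : ℂ := (171/8)*z + (-147/8)*z^3 + (-15/2)*b + (105/8)*b*z^2 + (-63/4)*b*z^4 + (23/2)*a + (-155/8)*a*z^2 + (49/2)*a*z^4 + (-37/8)*a*b*z + (35/8)*a*b*z^3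

lemma haC : ((Real.sqrt 3 : ℝ) : ℂ)^2 = 3 := by
  rw [← Complex.ofReal_pow, Real.sq_sqrt (by norm_num : (0:ℝ) ≤ 3)]; norm_num
lemma hbC : ((Real.sqrt 7 : ℝ) : ℂ)^2 = 7 := by
  rw [← Complex.ofReal_pow, Real.sq_sqrt (by norm_num : (0:ℝ) ≤ 7)]; norm_num
lemma hzaCeq : ((zaP : ℝ) : ℂ) = (((Real.sqrt 3:ℝ):ℂ) + ((Real.sqrt 7:ℝ):ℂ))/2 := by
  unfold zaP; push_cast; ring
lemma hcaCeq : ((caP : ℝ) : ℂ) = (21/256) * (14*((Real.sqrt 3:ℝ):ℂ) - 9*((Real.sqrt 7:ℝ):ℂ)) := by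
  unfold caP; push_cast; ring
lemma sqrt7_lb : (2.6:ℝ) ≤ Real.sqrt 7 := by
  nlinarith [Real.sq_sqrt (by norm_num : (0:ℝ) ≤ 7), Real.sqrt_nonneg 7]
lemma sqrt7_ub : Real.sqrt 7 ≤ 2.6458 := by
  nlinarith [Real.sq_sqrt (by norm_num : (0:ℝ) ≤ 7), Real.sqrt_nonneg 7]
lemma sqrt3_lb : (1.73:ℝ) ≤ Real.sqrt 3 := by
  nlinarith [Real.sq_sqrt (by norm_num : (0:ℝ) ≤ 3), Real.sqrt_nonneg 3]
lemma sqrt3_ub : Real.sqrt 3 ≤ 2 := by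
  nlinarith [Real.sq_sqrt (by norm_num : (0:ℝ) ≤ 3), Real.sqrt_nonneg 3]
lemma hzaP2 : (2:ℝ) < zaP := by
  unfold zaP; linarith [sqrt7_lb, sqrt3_lb]
lemma hzaC0 : ((zaP:ℝ):ℂ) ≠ 0 :=
  Complex.ofReal_ne_zero.mpr (by linarith [hzaP2])
lemma hd0 : (0:ℝ) < 14*Real.sqrt 3 - 9*Real.sqrt 7 := by nlinarith [sqrt7_ub, sqrt3_lb]
lemma hcaP0 : (0:ℝ) < caP := by
  unfold caP; nlinarith [hd0]
lemma sqrt21_eq : Real.sqrt 21 = Real.sqrt 3 * Real.sqrt 7 := by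
  rw [show (21:ℝ) = 3*7 by norm_num, Real.sqrt_mul (by norm_num)]

lemma polyid (a b z : ℂ) (ha : a^2 = 3) (hb : b^2 = 7) :
    a*(z^2-1)*(-(z^4-z^2+1)-8*z^2) + 9*(z*(z^4-z^2+1))
      + (64/3)*((21/256)*(14*a-9*b))*(z*((z^4-z^2+1)*(z-(a+b)/2)^3))
    = (z-(a+b)/2)^4 * Ppoly a b z := by
  simp only [Ppoly]
  linear_combination ((519/128)*z + (-7967/128)*z^3 + (425/8)*z^5 + (49/4)*z^7 + (-231/32)*b + (4977/128)*b*z^2 + (-2059/64)*b*z^4 + (-259/16)*b*z^6 + (-117/64)*b^2*z + (729/64)*b^2*z^3 + (-105/32)*b^2*z^5 + (-1/16)*b^3 + (-449/64)*b^3*z^2 + (203/32)*b^3*z^4 + (37/32)*b^4*z + (-35/32)*b^4*z^3 + (-69/32)*a + (1977/128)*a*z^2 + (-99/32)*a*z^4 + (-147/8)*a*z^6 + (231/128)*a*b*z + (-585/128)*a*b*z^3 + (483/32)*a*b*z^5 + (-39/16)*a*b^2 + (-189/64)*a*b^2*z^2 + (21/16)*a*b^2*z^4 + (111/64)*a*b^3*z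 + (-105/64)*a*b^3*z^3 + (173/128)*a^2*z + (-701/128)*a^2*z^3 + (147/16)*a^2*z^5 + (-77/32)*a^2*b + (219/128)*a^2*b*z^2 + (-189/64)*a^2*b*z^4 + (37/32)*a^2*b^2*z + (-35/32)*a^2*b^2*z^3 + (-23/32)*a^3 + (155/128)*a^3*z^2 + (-49/32)*a^3*z^4 + (37/128)*a^3*b*z + (-35/128)*a^3*b*z^3)*ha + ((-387/128)*z + (3579/128)*z^3 + (-21)*z^5 + (-63/8)*z^7 + (99/32)*b + (-2133/128)*b*z^2 + (567/64)*b*z^4 + (189/16)*b*z^6 + (45/128)*b^2*z + (315/128)*b^2*z^3 + (-189/32)*b^2*z^5 + (15/32)*b^3 + (-105/128)*b^3*z^2 + (63/64)*b^3*z^4 + (25/32)*a + (-957/128)*a*z^2 + (-185/32)*a*z^4 + (14)*a*z^6 + (-99/128)*a*b*z + (1517/128)*a*b*z^3 + (-483/32)*a*b*z^5 + (37/32)*a*b^2 + (-561/128)*a*b^2*z^2 + (147/32)*a*b^2*z^4 + (37/128)*a*b^3*z + (-35/128)*a*b^3*z^3)*hb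

/-- The cubic remainder identity near `z_a`. -/
lemma key (z : ℂ) (hz : z ≠ 0) (hD : z^4 - z^2 + 1 ≠ 0) :
    ((Real.sqrt 3:ℝ):ℂ)*(z-1/z)*(-(1:ℂ)/8 - 1/((z-1/z)^2+1)) + 9/8
        + (8/3)*((caP:ℝ):ℂ)*(z-((zaP:ℝ):ℂ))^3
      = (z-((zaP:ℝ):ℂ))^4 * (Ppoly (Real.sqrt 3) (Real.sqrt 7) z / (8*(z*(z^4-z^2+1)))) := by
  have hden : (8:ℂ)*(z*(z^4-z^2+1)) ≠ 0 :=
    mul_ne_zero (by norm_num) (mul_ne_zero hz hD)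
  have hw : ((z-1/z)^2+1) = (z^4-z^2+1)/z^2 := by field_simp; ring
  have h2 : 1/((z-1/z)^2+1) = z^2/(z^4-z^2+1) := by rw [hw, one_div_div]
  rw [← mul_div_assoc, eq_div_iff hden, hzaCeq, hcaCeq]
  set a : ℂ := ((Real.sqrt 3:ℝ):ℂ) with ha_def
  set b : ℂ := ((Real.sqrt 7:ℝ):ℂ) with hb_def
  have expand : (a*(z-1/z)*(-(1:ℂ)/8 - 1/((z-1/z)^2+1)) + 9/8
        + (8/3)*((21/256)*(14*a-9*b))*(z-(a+b)/2)^3) * (8*(z*(z^4-z^2+1)))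
      = a*(z^2-1)*(-(z^4-z^2+1)-8*z^2) + 9*(z*(z^4-z^2+1))
        + (64/3)*((21/256)*(14*a-9*b))*(z*((z^4-z^2+1)*(z-(a+b)/2)^3)) := by
    have m1 : (z - 1/z)*z = z^2 - 1 := by field_simp
    have m2 : (-(1:ℂ)/8 - z^2/(z^4-z^2+1)) * (8*(z^4-z^2+1)) = -(z^4-z^2+1) - 8*z^2 := by
      rw [sub_mul, div_mul_eq_mul_div (z^2), mul_div_assoc (z^2), mul_div_cancel_right₀ (8:ℂ) hD]; ring
    rw [h2]
    linear_combination (a*(-(1:ℂ)/8 - z^2/(z^4-z^2+1))*(8*(z^4-z^2+1)))*m1 + (a*(z^2-1))*m2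
  rw [expand]
  exact polyid a b z haC hbC

/-- The linear remainder identity for the g-part. -/
lemma gkey (z : ℂ) (hz : z ≠ 0) :
    ((Real.sqrt 3:ℝ):ℂ)*(z-1/z) - 3
      = (((Real.sqrt 3:ℝ):ℂ)*(7-((Real.sqrt 21:ℝ):ℂ))/2)*(z-((zaP:ℝ):ℂ))
        + (-(((Real.sqrt 3:ℝ):ℂ)*(z-((zaP:ℝ):ℂ))^2))/(z*((zaP:ℝ):ℂ)^2) := by
  have h37 : ((Real.sqrt 21:ℝ):ℂ) = ((Real.sqrt 3:ℝ):ℂ)*((Real.sqrt 7:ℝ):ℂ) := by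
    rw [← Complex.ofReal_mul, sqrt21_eq]
  rw [h37]
  have hden : z*((zaP:ℝ):ℂ)^2 ≠ 0 := mul_ne_zero hz (pow_ne_zero _ hzaC0)
  have main : ((Real.sqrt 3:ℝ):ℂ)*(z-1/z) - 3
      - (((Real.sqrt 3:ℝ):ℂ)*(7-((Real.sqrt 3:ℝ):ℂ)*((Real.sqrt 7:ℝ):ℂ))/2)*(z-((zaP:ℝ):ℂ))
      = (-(((Real.sqrt 3:ℝ):ℂ)*(z-((zaP:ℝ):ℂ))^2))/(z*((zaP:ℝ):ℂ)^2) := by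
    rw [eq_div_iff hden]
    have expand : (((Real.sqrt 3:ℝ):ℂ)*(z-1/z) - 3
        - (((Real.sqrt 3:ℝ):ℂ)*(7-((Real.sqrt 3:ℝ):ℂ)*((Real.sqrt 7:ℝ):ℂ))/2)*(z-((zaP:ℝ):ℂ)))
        * (z*((zaP:ℝ):ℂ)^2)
        = ((Real.sqrt 3:ℝ):ℂ)*(z^2-1)*((zaP:ℝ):ℂ)^2 - 3*(z*((zaP:ℝ):ℂ)^2)
        - (((Real.sqrt 3:ℝ):ℂ)*(7-((Real.sqrt 3:ℝ):ℂ)*((Real.sqrt 7:ℝ):ℂ))/2)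
          *((z-((zaP:ℝ):ℂ))*(z*((zaP:ℝ):ℂ)^2)) := by
      field_simp
    rw [expand, hzaCeq]
    set a : ℂ := ((Real.sqrt 3:ℝ):ℂ)
    set b : ℂ := ((Real.sqrt 7:ℝ):ℂ)
    linear_combination ((-7/16)*z + (-7/8)*b*z^2 + (3/4)*b^2*z + (1/8)*b^3*z^2 + (-1/16)*b^4*z + (-5/8)*a*z^2 + (9/8)*a*b*z + (1/4)*a*b^2*z^2 + (-3/16)*a*b^3*z + (-1/16)*a^3*b*z + (7/16)*a^2*z + (1/8)*a^2*b*z^2 + (-3/16)*a^2*b^2*z)*haC + ((3/16)*z + (3/8)*b*z^2 + (-3/16)*b^2*z + (1/8)*a*z^2 + (-1/8)*a*b*z)*hbC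
  linear_combination main

/-- Value of the phase at the saddle point. -/
lemma theta_at_za (ξ : ℝ) : theta12C ξ ((zaP:ℝ):ℂ) = 3*(ξ:ℂ) - 3/4 := by
  have h1 : 1/((zaP:ℝ):ℂ) = ((zaP:ℝ):ℂ) - ((Real.sqrt 3:ℝ):ℂ) := by
    rw [div_eq_iff hzaC0, hzaCeq]
    linear_combination (1/4)*haC - (1/4)*hbC
  unfold theta12C
  rw [h1]
  have h2 : ((zaP:ℝ):ℂ) - (((zaP:ℝ):ℂ) - ((Real.sqrt 3:ℝ):ℂ)) = ((Real.sqrt 3:ℝ):ℂ) := by ring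
  rw [h2, haC]
  norm_num
  linear_combination ((ξ:ℂ) - 1/4)*haC

lemma sca : 16 * s1P * caP ^ ((1:ℝ)/3) = Real.sqrt 3 * (Real.sqrt 21 - 7) / 2 := by
  have hd := hd0
  have e1 : caP ^ ((1:ℝ)/3)
      = ((3:ℝ)^((1:ℝ)/3) * (7:ℝ)^((1:ℝ)/3) / (2:ℝ)^((8:ℝ)/3))
        * (14*Real.sqrt 3 - 9*Real.sqrt 7)^((1:ℝ)/3) := by
    unfold caP
    rw [Real.mul_rpow (by norm_num) hd.le]
    congr 1
    rw [show (21/256:ℝ) = 3*7/2^(8:ℕ) by norm_num,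
        Real.div_rpow (by norm_num) (by positivity),
        Real.mul_rpow (by norm_num) (by norm_num),
        ← Real.rpow_natCast (2:ℝ) 8, ← Real.rpow_mul (by norm_num)]
    norm_num
  have h36 : (3:ℝ)^((1:ℝ)/6) * (3:ℝ)^((1:ℝ)/3) = Real.sqrt 3 := by
    rw [← Real.rpow_add (by norm_num : (0:ℝ)<3), Real.sqrt_eq_rpow]; norm_num
  have h2s : (2:ℝ)^((7:ℝ)/3) * (2:ℝ)^((8:ℝ)/3) = 32 := by
    rw [← Real.rpow_add (by norm_num : (0:ℝ)<2),
        show (7:ℝ)/3+(8:ℝ)/3 = ((5:ℕ):ℝ) by norm_num, Real.rpow_natCast]; norm_num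
  have h7 : (7:ℝ)^((1:ℝ)/3) ≠ 0 := (Real.rpow_pos_of_pos (by norm_num) _).ne'
  have h2a : (2:ℝ)^((7:ℝ)/3) ≠ 0 := (Real.rpow_pos_of_pos (by norm_num) _).ne'
  have h2b : (2:ℝ)^((8:ℝ)/3) ≠ 0 := (Real.rpow_pos_of_pos (by norm_num) _).ne'
  have hdE : (14*Real.sqrt 3 - 9*Real.sqrt 7)^((1:ℝ)/3) ≠ 0 := (Real.rpow_pos_of_pos hd _).ne'
  rw [e1]
  unfold s1P
  field_simp
  linear_combination (32*(Real.sqrt 21-7))*h36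
    + (-(Real.sqrt 3)*(Real.sqrt 21-7))*h2s
set_option maxHeartbeats 2000000 in
/-- Local phase expansion near `z_a`: for `0 ≤ (ξ + 1/8)t^{2/3} ≤ C₀` and `z` near `z_a`,
`−tθ₁₂(z) = −tθ₁₂(z_a) + (8/3)zhat³ + 2stildezhat + O(t^{−1/3}(|zhat|² + |zhat|⁴))`, where
`zhat = (c_a t)^{1/3}(z − z_a)` and `stilde = s₁(1 + 8ξ)t^{2/3}`. -/
theorem local_phase_expansion_za (C₀ : ℝ) (hC₀ : 0 < C₀) :
    ∃ δ > (0:ℝ), ∃ C > (0:ℝ), ∃ T > (0:ℝ), ∀ t : ℝ, T ≤ t → ∀ ξ : ℝ,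
      0 ≤ (ξ + 1/8) * t ^ ((2:ℝ)/3) → (ξ + 1/8) * t ^ ((2:ℝ)/3) ≤ C₀ →
      ∀ z : ℂ, ‖z - (zaP : ℂ)‖ ≤ δ →
        let zhat : ℂ := (((caP * t) ^ ((1:ℝ)/3) : ℝ) : ℂ) * (z - (zaP : ℂ))
        let stilde : ℝ := s1P * (1 + 8*ξ) * t ^ ((2:ℝ)/3)
        ‖-(t : ℂ) * theta12C ξ z + (t : ℂ) * theta12C ξ (zaP : ℂ)
            - (8/3) * zhat^3 - 2 * (stilde : ℂ) * zhat‖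
          ≤ C * t ^ (-(1:ℝ)/3) * (‖zhat‖^2 + ‖zhat‖^4) := by
  classical
  -- denominator nonvanishing near za
  have hcont : Continuous fun w : ℂ => w*(w^4-w^2+1) := by continuity
  have hopen : IsOpen {w : ℂ | w*(w^4-w^2+1) ≠ 0} :=
    isOpen_compl_singleton.preimage hcont
  have hzamem : ((zaP:ℝ):ℂ) ∈ {w : ℂ | w*(w^4-w^2+1) ≠ 0} := by
    have hpos : (0:ℝ) < zaP*(zaP^4 - zaP^2 + 1) := by
      nlinarith [hzaP2, sq_nonneg zaP, sq_nonneg (zaP^2 - 1), sq_nonneg (zaP - 2)]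
    have hcast : ((zaP:ℝ):ℂ)*(((zaP:ℝ):ℂ)^4-((zaP:ℝ):ℂ)^2+1)
        = (((zaP*(zaP^4-zaP^2+1)) : ℝ):ℂ) := by push_cast; ring
    simp only [Set.mem_setOf_eq, hcast]
    exact Complex.ofReal_ne_zero.mpr hpos.ne'
  obtain ⟨ε₁, hε₁pos, hball⟩ := Metric.isOpen_iff.mp hopen _ hzamem
  set δ : ℝ := min (ε₁/2) 1 with hδdef
  have hδpos : 0 < δ := lt_min (by linarith) one_pos
  have hδ1 : δ ≤ 1 := min_le_right _ _
  have hsub : Metric.closedBall ((zaP:ℝ):ℂ) δ ⊆ {w : ℂ | w*(w^4-w^2+1) ≠ 0} :=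
    (Metric.closedBall_subset_ball (lt_of_le_of_lt (min_le_left _ _) (by linarith))).trans hball
  -- bound on the rational remainder over the closed ball
  obtain ⟨M₀, hM₀⟩ := (isCompact_closedBall ((zaP:ℝ):ℂ) δ).exists_bound_of_continuousOn
    (f := fun w => Ppoly (Real.sqrt 3) (Real.sqrt 7) w / (8*(w*(w^4-w^2+1))))
    (ContinuousOn.div (Continuous.continuousOn (by unfold Ppoly; continuity))
      (Continuous.continuousOn (by continuity))
      (fun w hw => mul_ne_zero (by norm_num) (hsub hw)))
  set M : ℝ := max M₀ 1 with hMdef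
  have hM1 : (1:ℝ) ≤ M := le_max_right _ _
  have hca43 : (0:ℝ) < caP^((4:ℝ)/3) := Real.rpow_pos_of_pos hcaP0 _
  have hca23 : (0:ℝ) < caP^((2:ℝ)/3) := Real.rpow_pos_of_pos hcaP0 _
  set C₁ : ℝ := M / caP^((4:ℝ)/3) with hC₁def
  set C₂ : ℝ := 2*C₀ / caP^((2:ℝ)/3) with hC₂def
  have hC₁pos : 0 < C₁ := div_pos (by linarith) hca43
  have hC₂pos : 0 < C₂ := div_pos (by linarith) hca23
  refine ⟨δ, hδpos, max C₁ C₂, lt_max_of_lt_left hC₁pos, 1, one_pos, ?_⟩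
  intro t ht ξ hξ0 hξ1 z hzball
  intro zhat stilde
  unfold zhat stilde
  have ht0 : (0:ℝ) < t := lt_of_lt_of_le one_pos ht
  set ε : ℝ := ξ + 1/8 with hεdef
  have ht23 : (0:ℝ) < t^((2:ℝ)/3) := Real.rpow_pos_of_pos ht0 _
  have ht13 : (0:ℝ) < t^((1:ℝ)/3) := Real.rpow_pos_of_pos ht0 _
  have hε0 : 0 ≤ ε := by
    by_contra h; push_neg at h
    have : ε * t^((2:ℝ)/3) < 0 := mul_neg_of_neg_of_pos h ht23
    linarith [hξ0]
  have hεt : ε * t^((2:ℝ)/3) ≤ C₀ := hξ1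
  -- membership facts
  have hz_in : z ∈ Metric.closedBall ((zaP:ℝ):ℂ) δ := by
    rw [Metric.mem_closedBall, Complex.dist_eq]; exact hzball
  have hzD : z*(z^4-z^2+1) ≠ 0 := hsub hz_in
  have hz0 : z ≠ 0 := (mul_ne_zero_iff.mp hzD).1
  have hD : z^4-z^2+1 ≠ 0 := (mul_ne_zero_iff.mp hzD).2
  have hMz : ‖Ppoly (Real.sqrt 3) (Real.sqrt 7) z / (8*(z*(z^4-z^2+1)))‖ ≤ M := by
    have := hM₀ z hz_in
    exact this.trans (le_max_left _ _)
  have habs_u : ‖z - ((zaP:ℝ):ℂ)‖ ≤ 1 := hzball.trans hδ1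
  have habs_z : 1 ≤ ‖z‖ := by
    have h1 : ‖((zaP:ℝ):ℂ)‖ = zaP := by
      rw [Complex.norm_real, Real.norm_eq_abs, abs_of_pos (by linarith [hzaP2])]
    have h2 : ‖((zaP:ℝ):ℂ)‖ - ‖((zaP:ℝ):ℂ) - z‖ ≤ ‖z‖ := by
      have := norm_sub_norm_le ((zaP:ℝ):ℂ) (((zaP:ℝ):ℂ) - z)
      calc ‖((zaP:ℝ):ℂ)‖ - ‖((zaP:ℝ):ℂ) - z‖
          ≤ ‖((zaP:ℝ):ℂ) - (((zaP:ℝ):ℂ) - z)‖ := this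
        _ = ‖z‖ := by norm_num
    have h3 : ‖((zaP:ℝ):ℂ) - z‖ = ‖z - ((zaP:ℝ):ℂ)‖ :=
      norm_sub_rev _ _
    rw [h1, h3] at h2
    linarith [hzaP2, habs_u]
  -- the scaling factor
  set r : ℝ := (caP*t)^((1:ℝ)/3) with hrdef
  have hcaPt : 0 < caP*t := mul_pos hcaP0 ht0
  have hr0 : 0 < r := Real.rpow_pos_of_pos hcaPt _
  have hr_split : r = caP^((1:ℝ)/3) * t^((1:ℝ)/3) := Real.mul_rpow hcaP0.le ht0.le
  -- split of the phase
  have hξc : ((ξ:ℝ):ℂ) = ((ε:ℝ):ℂ) - 1/8 := by rw [hεdef]; push_cast; ring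
  have hsplit : theta12C ξ z
      = (((Real.sqrt 3:ℝ):ℂ)*(z-1/z)*(-(1:ℂ)/8 - 1/((z-1/z)^2+1)))
        + ((ε:ℝ):ℂ)*(((Real.sqrt 3:ℝ):ℂ)*(z-1/z)) := by
    unfold theta12C
    rw [hξc]; ring
  have hthza : theta12C ξ ((zaP:ℝ):ℂ) = 3*(ξ:ℂ) - 3/4 := theta_at_za ξ
  -- cube of the scaling factor
  have hr3R : r^(3:ℕ) = caP*t := by
    rw [hrdef, ← Real.rpow_natCast ((caP*t)^((1:ℝ)/3)) 3, ← Real.rpow_mul hcaPt.le]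
    norm_num
  have hr3C : ((r:ℝ):ℂ)^3 = ((caP:ℝ):ℂ)*((t:ℝ):ℂ) := by
    rw [← Complex.ofReal_pow, ← Complex.ofReal_mul]
    exact_mod_cast congrArg (fun x : ℝ => (x:ℂ)) hr3R
  -- the s̃·r identity
  set st : ℝ := s1P * (1 + 8*ξ) * t ^ ((2:ℝ)/3) with hstdef
  have hstr : 2*(st * r) = (Real.sqrt 3*(Real.sqrt 21 - 7)/2) * (ε*t) := by
    have h8 : 1+8*ξ = 8*ε := by rw [hεdef]; ring
    have htt : t^((2:ℝ)/3)*t^((1:ℝ)/3) = t := by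
      rw [← Real.rpow_add ht0]; norm_num
    calc 2*(st*r) = (16*s1P*(caP^((1:ℝ)/3))) * (ε*(t^((2:ℝ)/3)*t^((1:ℝ)/3))) := by
          rw [hstdef, hr_split, h8]; ring
      _ = (Real.sqrt 3*(Real.sqrt 21-7)/2)*(ε*t) := by rw [sca, htt]
  have hstrC : 2*((st:ℝ):ℂ)*((r:ℝ):ℂ)
      = (((Real.sqrt 3:ℝ):ℂ)*(((Real.sqrt 21:ℝ):ℂ) - 7)/2) * (((ε:ℝ):ℂ)*((t:ℝ):ℂ)) := by
    calc 2*((st:ℝ):ℂ)*((r:ℝ):ℂ) = (((2*(st*r)):ℝ):ℂ) := by push_cast; ring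
      _ = ((((Real.sqrt 3*(Real.sqrt 21-7)/2)*(ε*t)):ℝ):ℂ) := by rw [hstr]
      _ = (((Real.sqrt 3:ℝ):ℂ)*(((Real.sqrt 21:ℝ):ℂ) - 7)/2) * (((ε:ℝ):ℂ)*((t:ℝ):ℂ)) := by
          push_cast; ring
  -- the exact remainder identity
  have hexp : -(t:ℂ)*theta12C ξ z + (t:ℂ)*theta12C ξ ((zaP:ℝ):ℂ)
      - (8/3)*(((r:ℝ):ℂ)*(z-((zaP:ℝ):ℂ)))^3 - 2*((st:ℝ):ℂ)*(((r:ℝ):ℂ)*(z-((zaP:ℝ):ℂ)))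
      = -(t:ℂ)*((z-((zaP:ℝ):ℂ))^4 * (Ppoly (Real.sqrt 3) (Real.sqrt 7) z / (8*(z*(z^4-z^2+1)))))
        + (t:ℂ)*((ε:ℝ):ℂ)*((((Real.sqrt 3:ℝ):ℂ)*(z-((zaP:ℝ):ℂ))^2)/(z*((zaP:ℝ):ℂ)^2)) := by
    have k := key z hz0 hD
    have g := gkey z hz0
    linear_combination (-(t:ℂ))*hsplit + (t:ℂ)*hthza + (3*(t:ℂ))*hξc + (-(t:ℂ))*k
      + (-(t:ℂ)*((ε:ℝ):ℂ))*g + (-(8:ℂ)/3*(z-((zaP:ℝ):ℂ))^3)*hr3C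
      + (-(z-((zaP:ℝ):ℂ)))*hstrC
  -- absolute value bounds
  rw [hexp]
  set u : ℂ := z - ((zaP:ℝ):ℂ) with hudef
  set Rz : ℂ := Ppoly (Real.sqrt 3) (Real.sqrt 7) z / (8*(z*(z^4-z^2+1))) with hRzdef
  have habs1 : ‖-(t:ℂ)*(u^4 * Rz)‖ = t * (‖u‖)^4 * ‖Rz‖ := by
    rw [show -(t:ℂ)*(u^4 * Rz) = (((-t:ℝ)):ℂ)*(u^4*Rz) by push_cast; ring,
      norm_mul, norm_mul, norm_pow, Complex.norm_real, Real.norm_eq_abs, abs_neg, abs_of_pos ht0]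
    ring
  have habs2 : ‖(t:ℂ)*((ε:ℝ):ℂ)*((((Real.sqrt 3:ℝ):ℂ)*u^2)/(z*((zaP:ℝ):ℂ)^2))‖
      = t * ε * (Real.sqrt 3 * (‖u‖)^2 / (‖z‖ * zaP^2)) := by
    rw [norm_mul, norm_mul, norm_div, norm_mul, norm_mul, norm_pow, norm_pow,
      Complex.norm_real, Real.norm_eq_abs, Complex.norm_real, Real.norm_eq_abs,
      Complex.norm_real, Real.norm_eq_abs, Complex.norm_real, Real.norm_eq_abs,
      _root_.abs_of_pos ht0, _root_.abs_of_nonneg hε0,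
      _root_.abs_of_nonneg (Real.sqrt_nonneg 3),
      _root_.abs_of_pos (by linarith [hzaP2] : (0:ℝ) < zaP)]
  have hzhat_abs : ‖((r:ℝ):ℂ)*u‖ = r * ‖u‖ := by
    rw [norm_mul, Complex.norm_real, Real.norm_eq_abs, abs_of_pos hr0]
  -- term 1 bound
  have hterm1 : t * (‖u‖)^4 * ‖Rz‖
      ≤ C₁ * t^(-(1:ℝ)/3) * (‖((r:ℝ):ℂ)*u‖)^4 := by
    have hr4 : r^(4:ℕ) = caP^((4:ℝ)/3)*t^((4:ℝ)/3) := by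
      rw [hrdef, ← Real.rpow_natCast ((caP*t)^((1:ℝ)/3)) 4, ← Real.rpow_mul hcaPt.le,
        show ((1:ℝ)/3*(4:ℕ) : ℝ) = (4:ℝ)/3 by norm_num, Real.mul_rpow hcaP0.le ht0.le]
    have htm : t^(-(1:ℝ)/3)*t^((4:ℝ)/3) = t := by
      rw [← Real.rpow_add ht0]; norm_num
    have heq : C₁ * t^(-(1:ℝ)/3) * (r * ‖u‖)^4
        = t * (‖u‖)^4 * M := by
      rw [hC₁def, mul_pow, hr4]
      calc M / caP^((4:ℝ)/3) * t^(-(1:ℝ)/3) * (caP^((4:ℝ)/3)*t^((4:ℝ)/3) * ‖u‖ ^ 4)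
          = (t^(-(1:ℝ)/3)*t^((4:ℝ)/3)) * ‖u‖ ^ 4 * M * (caP^((4:ℝ)/3)/caP^((4:ℝ)/3)) := by
            ring
        _ = t * (‖u‖)^4 * M := by rw [htm, div_self hca43.ne']; ring
    rw [hzhat_abs, heq]
    exact mul_le_mul_of_nonneg_left hMz (by positivity : (0:ℝ) ≤ t * (‖u‖)^4)
  -- term 2 bound
  have hterm2 : t * ε * (Real.sqrt 3 * (‖u‖)^2 / (‖z‖ * zaP^2))
      ≤ C₂ * t^(-(1:ℝ)/3) * (‖((r:ℝ):ℂ)*u‖)^2 := by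
    have hr2 : r^(2:ℕ) = caP^((2:ℝ)/3)*t^((2:ℝ)/3) := by
      rw [hrdef, ← Real.rpow_natCast ((caP*t)^((1:ℝ)/3)) 2, ← Real.rpow_mul hcaPt.le,
        show ((1:ℝ)/3*(2:ℕ) : ℝ) = (2:ℝ)/3 by norm_num, Real.mul_rpow hcaP0.le ht0.le]
    have htm : t^(-(1:ℝ)/3)*t^((2:ℝ)/3) = t^((1:ℝ)/3) := by
      rw [← Real.rpow_add ht0]; norm_num
    have htt : t^((2:ℝ)/3)*t^((1:ℝ)/3) = t := by
      rw [← Real.rpow_add ht0]; norm_num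
    have hRHS : C₂ * t^(-(1:ℝ)/3) * (r * ‖u‖)^2
        = 2*C₀*t^((1:ℝ)/3) * (‖u‖)^2 := by
      rw [hC₂def, mul_pow, hr2]
      calc 2*C₀ / caP^((2:ℝ)/3) * t^(-(1:ℝ)/3) * (caP^((2:ℝ)/3)*t^((2:ℝ)/3) * ‖u‖ ^ 2)
          = (t^(-(1:ℝ)/3)*t^((2:ℝ)/3)) * ‖u‖ ^ 2 * (2*C₀) * (caP^((2:ℝ)/3)/caP^((2:ℝ)/3)) := by
            ring
        _ = 2*C₀*t^((1:ℝ)/3) * (‖u‖)^2 := by rw [htm, div_self hca23.ne']; ring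
    rw [hzhat_abs, hRHS]
    have hu2 : (0:ℝ) ≤ (‖u‖)^2 := sq_nonneg _
    have hzaPpos : (0:ℝ) < zaP := by linarith [hzaP2]
    have h4 : (1:ℝ) ≤ zaP^2 := by
      rw [sq]
      calc (1:ℝ) ≤ 2*2 := by norm_num
        _ ≤ zaP*zaP := mul_le_mul hzaP2.le hzaP2.le (by norm_num) (by linarith [hzaP2])
    have hden1 : (1:ℝ) ≤ ‖z‖ * zaP^2 := by
      calc (1:ℝ) = 1*1 := by norm_num
        _ ≤ ‖z‖ * zaP^2 := mul_le_mul habs_z h4 (by norm_num) (by linarith [habs_z])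
    have hdenpos : (0:ℝ) < ‖z‖ * zaP^2 := by linarith
    have hfrac : Real.sqrt 3 * (‖u‖)^2 / (‖z‖ * zaP^2)
        ≤ 2 * (‖u‖)^2 := by
      rw [div_le_iff₀ hdenpos]
      have h1 : Real.sqrt 3 * (‖u‖)^2 ≤ 2 * (‖u‖)^2 :=
        mul_le_mul_of_nonneg_right sqrt3_ub hu2
      have h2 : 2 * (‖u‖)^2 ≤ 2 * (‖u‖)^2 * (‖z‖ * zaP^2) :=
        le_mul_of_one_le_right (by positivity) hden1
      linarith
    have hεtt : t * ε ≤ C₀ * t^((1:ℝ)/3) := by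
      have h5 : (ε * t^((2:ℝ)/3)) * t^((1:ℝ)/3) = t * ε := by
        rw [mul_assoc, htt]; ring
      rw [← h5]
      exact mul_le_mul_of_nonneg_right hεt ht13.le
    calc t * ε * (Real.sqrt 3 * (‖u‖)^2 / (‖z‖ * zaP^2))
        ≤ t * ε * (2 * (‖u‖)^2) := by
          apply mul_le_mul_of_nonneg_left hfrac (mul_nonneg ht0.le hε0)
      _ = (t*ε) * (2 * (‖u‖)^2) := by ring
      _ ≤ (C₀ * t^((1:ℝ)/3)) * (2 * (‖u‖)^2) := by
          apply mul_le_mul_of_nonneg_right hεtt (by positivity)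
      _ = 2*C₀*t^((1:ℝ)/3) * (‖u‖)^2 := by ring
  -- put it together
  have htmn : (0:ℝ) ≤ t^(-(1:ℝ)/3) := (Real.rpow_pos_of_pos ht0 _).le
  calc ‖-(t:ℂ)*(u^4 * Rz)
          + (t:ℂ)*((ε:ℝ):ℂ)*((((Real.sqrt 3:ℝ):ℂ)*u^2)/(z*((zaP:ℝ):ℂ)^2))‖
      ≤ ‖-(t:ℂ)*(u^4 * Rz)‖
        + ‖(t:ℂ)*((ε:ℝ):ℂ)*((((Real.sqrt 3:ℝ):ℂ)*u^2)/(z*((zaP:ℝ):ℂ)^2))‖ :=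
        norm_add_le _ _
    _ ≤ C₁ * t^(-(1:ℝ)/3) * (‖((r:ℝ):ℂ)*u‖)^4
        + C₂ * t^(-(1:ℝ)/3) * (‖((r:ℝ):ℂ)*u‖)^2 := by
        rw [habs1, habs2]; exact add_le_add hterm1 hterm2
    _ ≤ max C₁ C₂ * t^(-(1:ℝ)/3) * (‖((r:ℝ):ℂ)*u‖)^4
        + max C₁ C₂ * t^(-(1:ℝ)/3) * (‖((r:ℝ):ℂ)*u‖)^2 := by
        have hs2 : (0:ℝ) ≤ (‖((r:ℝ):ℂ)*u‖)^2 := by positivity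
        have hs4 : (0:ℝ) ≤ (‖((r:ℝ):ℂ)*u‖)^4 := by positivity
        exact add_le_add
          (mul_le_mul_of_nonneg_right
            (mul_le_mul_of_nonneg_right (le_max_left C₁ C₂) htmn) hs4)
          (mul_le_mul_of_nonneg_right
            (mul_le_mul_of_nonneg_right (le_max_right C₁ C₂) htmn) hs2)
    _ = max C₁ C₂ * t^(-(1:ℝ)/3) * ((‖((r:ℝ):ℂ)*u‖)^2 + (‖((r:ℝ):ℂ)*u‖)^4) := by
        ring
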